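/- Let X1, X2, X3 be three non-collinear points in the hyperbolic plane and w > 0. The location of the center of mass of the system {(X1,w), (X2,w), (X3,w)} is the point of intersection of the three medians of triangle X1X2X3. -/
import Mathlib


open Real UpperHalfPlane

noncomputable section

/-- `Z` lies on the geodesic segment from `X` to `Y` (hyperbolic betweenness). -/
def HBtw (X Z Y : ℍ) : Prop := dist X Z + dist Z Y = dist X Y

/-- `(Z, z)` is the hyperbolic centroid of the point-masses `(X, x)` and `(Y, y)`:
`Z` lies between `X` and `Y`, the moments about `Z` balance, and
`z = x·cosh d(X,Z) + y·cosh d(Y,Z)`. -/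
def IsCentroid (X : ℍ) (x : ℝ) (Y : ℍ) (y : ℝ) (Z : ℍ) (z : ℝ) : Prop :=
  HBtw X Z Y ∧ x * Real.sinh (dist X Z) = y * Real.sinh (dist Y Z) ∧
    z = x * Real.cosh (dist X Z) + y * Real.cosh (dist Y Z)

/-- `(C, c)` is the center of mass of the finite point-mass system
`(X i, x i), i = 0, …, n`, obtained by iterating the binary centroid operation. -/
def IsSystemCentroid : {n : ℕ} → (Fin (n + 1) → ℍ) → (Fin (n + 1) → ℝ) → ℍ → ℝ → Prop
  | 0, X, x, C, c => C = X 0 ∧ c = x 0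
  | n + 1, X, x, C, c => ∃ C' c', IsSystemCentroid (Fin.init X) (Fin.init x) C' c' ∧
      IsCentroid C' c' (X (Fin.last (n + 1))) (x (Fin.last (n + 1))) C c

/-- `M` is the hyperbolic midpoint of `A` and `B`. -/
def HMidpoint (A B M : ℍ) : Prop := HBtw A M B ∧ dist A M = dist M B

set_option maxHeartbeats 1000000

def v0 (z : ℍ) : ℝ := (z.re^2 + z.im^2 + 1) / (2 * z.im)
def v1 (z : ℍ) : ℝ := z.re / z.im
def v2 (z : ℍ) : ℝ := (z.re^2 + z.im^2 - 1) / (2 * z.im)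

lemma coshQ (z w : ℍ) :
    -(v0 z * v0 w) + v1 z * v1 w + v2 z * v2 w = -Real.cosh (dist z w) := by
  have hz : (0:ℝ) < z.im := z.im_pos
  have hw : (0:ℝ) < w.im := w.im_pos
  have hd : Real.cosh (dist z w) = 1 + ((z.re - w.re)^2 + (z.im - w.im)^2) / (2 * z.im * w.im) := by
    rw [UpperHalfPlane.cosh_dist, Complex.dist_eq_re_im, Real.sq_sqrt (by positivity)]
    norm_num [UpperHalfPlane.coe_re, UpperHalfPlane.coe_im]
  rw [hd]
  unfold v0 v1 v2
  field_simp
  ring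

lemma cosh_inj_nonneg {x y : ℝ} (hx : 0 ≤ x) (hy : 0 ≤ y) (h : Real.cosh x = Real.cosh y) :
    x = y :=
  Real.cosh_strictMonoOn.injOn hx hy h


lemma null_orth {A0 A1 A2 B0 B1 B2 : ℝ} (hA : A0*A0 - A1*A1 - A2*A2 = 1)
    (h1 : B0*A0 = B1*A1 + B2*A2) (h2 : B0*B0 = B1*B1 + B2*B2) :
    B0 = 0 ∧ B1 = 0 ∧ B2 = 0 := by
  have e6 : B0*B0*(A0*A0) - B0*B0 = (B1*A1 + B2*A2)^2 + (B1*A2 - B2*A1)^2 := by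
    linear_combination (A1*A1 + A2*A2) * h2 + (B0*B0) * hA
  have e7 : B0*B0*(A0*A0) = (B1*A1 + B2*A2)^2 := by
    linear_combination (B0*A0 + B1*A1 + B2*A2) * h1
  have hB0le : B0*B0 ≤ 0 := by nlinarith [sq_nonneg (B1*A2 - B2*A1)]
  have hB0 : B0 = 0 := mul_self_eq_zero.mp (le_antisymm hB0le (mul_self_nonneg B0))
  rw [hB0] at h2
  have hB1 : B1 = 0 := mul_self_eq_zero.mp
    (le_antisymm (by nlinarith [mul_self_nonneg B2]) (mul_self_nonneg B1))
  have hB2 : B2 = 0 := mul_self_eq_zero.mp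
    (le_antisymm (by nlinarith [mul_self_nonneg B1]) (mul_self_nonneg B2))
  exact ⟨hB0, hB1, hB2⟩

/-- geometry ⇒ linear combination in the Minkowski model -/
lemma hbtw_comb {X Z Y : ℍ} (hXY : X ≠ Y) (h : dist X Z + dist Z Y = dist X Y) :
    (Real.sinh (dist X Y) * v0 Z = Real.sinh (dist Z Y) * v0 X + Real.sinh (dist X Z) * v0 Y) ∧
    (Real.sinh (dist X Y) * v1 Z = Real.sinh (dist Z Y) * v1 X + Real.sinh (dist X Z) * v1 Y) ∧
    (Real.sinh (dist X Y) * v2 Z = Real.sinh (dist Z Y) * v2 X + Real.sinh (dist X Z) * v2 Y) := by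
  set a := dist X Z with ha
  set b := dist Z Y with hb
  have hd : dist X Y = a + b := h.symm
  set sa := Real.sinh a; set ca := Real.cosh a
  set sb := Real.sinh b; set cb := Real.cosh b
  have hpa : ca^2 - sa^2 = 1 := by simpa [sq] using Real.cosh_sq_sub_sinh_sq a
  have hpb : cb^2 - sb^2 = 1 := by simpa [sq] using Real.cosh_sq_sub_sinh_sq b
  have hsd : Real.sinh (dist X Y) = sa * cb + ca * sb := by rw [hd, Real.sinh_add]
  have hcd : Real.cosh (dist X Y) = ca * cb + sa * sb := by rw [hd, Real.cosh_add]
  -- the W vector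
  set W0 := Real.sinh (dist X Y) * v0 Z - sb * v0 X - sa * v0 Y with hW0
  set W1 := Real.sinh (dist X Y) * v1 Z - sb * v1 X - sa * v1 Y with hW1
  set W2 := Real.sinh (dist X Y) * v2 Z - sb * v2 X - sa * v2 Y with hW2
  have qXX := coshQ X X; have qYY := coshQ Y Y; have qZZ := coshQ Z Z
  have qXY := coshQ X Y; have qXZ := coshQ X Z; have qZY := coshQ Z Y
  rw [dist_self, Real.cosh_zero] at qXX qYY qZZ
  have qXZ' : -(v0 X * v0 Z) + v1 X * v1 Z + v2 X * v2 Z = -ca := qXZ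
  have qZY' : -(v0 Z * v0 Y) + v1 Z * v1 Y + v2 Z * v2 Y = -cb := qZY
  have qXY' : -(v0 X * v0 Y) + v1 X * v1 Y + v2 X * v2 Y = -(ca * cb + sa * sb) := by
    rw [qXY, hcd]
  -- ⟨W, vX⟩ = 0
  have hWX : -(W0 * v0 X) + W1 * v1 X + W2 * v2 X = 0 := by
    rw [hW0, hW1, hW2, hsd]
    linear_combination (sa*cb + ca*sb) * qXZ' - sb * qXX - sa * qXY' - sb * hpa
  -- ⟨W, vY⟩ = 0
  have hWY : -(W0 * v0 Y) + W1 * v1 Y + W2 * v2 Y = 0 := by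
    rw [hW0, hW1, hW2, hsd]
    linear_combination (sa*cb + ca*sb) * qZY' - sa * qYY - sb * qXY' - sa * hpb
  -- ⟨W, W⟩ = 0
  have hWW : -(W0 * W0) + W1 * W1 + W2 * W2 = 0 := by
    rw [hW0, hW1, hW2, hsd]
    linear_combination (sa*cb+ca*sb)^2 * qZZ + sb^2 * qXX + sa^2 * qYY
      - (2*(sa*cb+ca*sb)*sb) * qXZ' - (2*(sa*cb+ca*sb)*sa) * qZY' + (2*sa*sb) * qXY'
      + (sa^2*cb^2 - sa^2 - sa^2*sb^2) * hpb + sb^2 * hpa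
      - sa^2*(cb^2-sb^2-2) * hpb
  have e1 : W0 * v0 X = W1 * v1 X + W2 * v2 X := by linarith
  have e2 : W0 * W0 = W1 * W1 + W2 * W2 := by linarith
  have hA : v0 X * v0 X - v1 X * v1 X - v2 X * v2 X = 1 := by linarith [qXX]
  obtain ⟨hW0z, hW1z, hW2z⟩ := null_orth hA e1 e2
  have g0 := hW0.symm.trans hW0z
  have g1 := hW1.symm.trans hW1z
  have g2 := hW2.symm.trans hW2z
  exact ⟨by linarith, by linarith, by linarith⟩

lemma nonneg_sq_eq {a b : ℝ} (ha : 0 ≤ a) (hb : 0 ≤ b) (h : a^2 = b^2) : a = b := by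
  rw [← Real.sqrt_sq ha, h, Real.sqrt_sq hb]

/-- linear combination with nonneg coefficients ⇒ betweenness -/
lemma comb_hbtw {X Y Z : ℍ} {α β N : ℝ} (hα : 0 ≤ α) (hβ : 0 ≤ β) (hN : 0 < N)
    (h0 : N * v0 Z = α * v0 X + β * v0 Y)
    (h1 : N * v1 Z = α * v1 X + β * v1 Y)
    (h2 : N * v2 Z = α * v2 X + β * v2 Y) : HBtw X Z Y := by
  have qXX := coshQ X X; have qYY := coshQ Y Y; have qZZ := coshQ Z Z
  have qXY := coshQ X Y; have qXZ := coshQ X Z; have qZY := coshQ Z Y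
  rw [dist_self, Real.cosh_zero] at qXX qYY qZZ
  set D := Real.cosh (dist X Y) with hD
  set sD := Real.sinh (dist X Y) with hsD
  have hsD2 : sD^2 = D^2 - 1 := by
    rw [hsD, hD]; exact Real.sinh_sq _
  have eX : N * Real.cosh (dist X Z) = α + β * D := by
    linear_combination N*qXZ + v0 X * h0 - v1 X * h1 - v2 X * h2 - α*qXX - β*qXY
  have eY : N * Real.cosh (dist Y Z) = β + α * D := by
    rw [dist_comm Y Z]
    linear_combination N*qZY + v0 Y * h0 - v1 Y * h1 - v2 Y * h2 - β*qYY - α*qXY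
  have eN : N^2 = α^2 + β^2 + 2*α*β*D := by
    linear_combination (N*v0 Z + α*v0 X + β*v0 Y)*h0 - (N*v1 Z + α*v1 X + β*v1 Y)*h1
      - (N*v2 Z + α*v2 X + β*v2 Y)*h2 + N^2*qZZ - α^2*qXX - 2*α*β*qXY - β^2*qYY
  have hsX2 : (N * Real.sinh (dist X Z))^2 = (β * sD)^2 := by
    rw [mul_pow, Real.sinh_sq, mul_pow, hsD2]
    linear_combination (N*Real.cosh (dist X Z) + α + β*D) * eX - eN
  have hsY2 : (N * Real.sinh (dist Y Z))^2 = (α * sD)^2 := by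
    rw [mul_pow, Real.sinh_sq, mul_pow, hsD2]
    linear_combination (N*Real.cosh (dist Y Z) + β + α*D) * eY - eN
  have hsX : N * Real.sinh (dist X Z) = β * sD :=
    nonneg_sq_eq (by positivity) (by positivity) hsX2
  have hsY : N * Real.sinh (dist Y Z) = α * sD :=
    nonneg_sq_eq (by positivity) (by positivity) hsY2
  have key : Real.cosh (dist X Z + dist Z Y) = D := by
    have hN2 : (N:ℝ)^2 ≠ 0 := by positivity
    have : N^2 * Real.cosh (dist X Z + dist Z Y) = N^2 * D := by
      rw [Real.cosh_add]
      have hd1 : dist Z Y = dist Y Z := dist_comm Z Y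
      rw [hd1]
      linear_combination Real.cosh (dist Y Z) * N * eX + (α + β*D) * eY
        + Real.sinh (dist Y Z) * N * hsX + β * sD * hsY + α*β*hsD2 - D*eN
    exact mul_left_cancel₀ hN2 this
  show dist X Z + dist Z Y = dist X Y
  refine cosh_inj_nonneg (by positivity) dist_nonneg (by rw [key])

lemma mid_comb {X Y M : ℍ} (hXY : X ≠ Y) (hb : HBtw X M Y) (he : dist X M = dist M Y) :
    ((2 * Real.cosh (dist X M)) * v0 M = v0 X + v0 Y) ∧
    ((2 * Real.cosh (dist X M)) * v1 M = v1 X + v1 Y) ∧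
    ((2 * Real.cosh (dist X M)) * v2 M = v2 X + v2 Y) := by
  obtain ⟨g0, g1, g2⟩ := hbtw_comb hXY hb
  have hd : dist X Y = 2 * dist X M := by
    have := hb; unfold HBtw at this; linarith [he]
  have ha : 0 < dist X M := by
    rcases lt_or_eq_of_le (dist_nonneg (x := X) (y := M)) with h | h
    · exact h
    · exfalso; apply hXY; have : dist X Y = 0 := by rw [hd, ← h]; ring
      exact dist_eq_zero.mp this
  have hsa : 0 < Real.sinh (dist X M) := Real.sinh_pos_iff.mpr ha
  have hMY : dist M Y = dist X M := he.symm
  rw [hMY] at g0 g1 g2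
  rw [hd, two_mul, Real.sinh_add] at g0 g1 g2
  refine ⟨?_, ?_, ?_⟩ <;>
    [apply mul_left_cancel₀ hsa.ne'; apply mul_left_cancel₀ hsa.ne'; apply mul_left_cancel₀ hsa.ne'] <;>
    [linear_combination g0; linear_combination g1; linear_combination g2]


/-- Proposition 6.1: the center of mass of three equal point-masses at the vertices
of a hyperbolic triangle lies on each median, i.e. it is the medians' intersection. -/
theorem center_of_mass_three_equal_masses_on_medians (X₁ X₂ X₃ : ℍ) (w : ℝ)
    (hw : 0 < w)
    (hnc : ¬(HBtw X₁ X₂ X₃ ∨ HBtw X₂ X₁ X₃ ∨ HBtw X₁ X₃ X₂))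
    (M₁ M₂ M₃ : ℍ) (h₁ : HMidpoint X₂ X₃ M₁) (h₂ : HMidpoint X₁ X₃ M₂)
    (h₃ : HMidpoint X₁ X₂ M₃) (C : ℍ) (c : ℝ)
    (h : IsSystemCentroid (n := 2) ![X₁, X₂, X₃] ![w, w, w] C c) :
    HBtw X₁ C M₁ ∧ HBtw X₂ C M₂ ∧ HBtw X₃ C M₃ := by
  -- distinctness
  have h12 : X₁ ≠ X₂ := by
    intro e; exact hnc (Or.inr (Or.inl (by subst e; simp [HBtw])))
  have h23 : X₂ ≠ X₃ := by
    intro e; exact hnc (Or.inl (by subst e; simp [HBtw]))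
  have h13 : X₁ ≠ X₃ := by
    intro e; exact hnc (Or.inr (Or.inl (by subst e; simp [HBtw])))
  -- unpack the system centroid
  obtain ⟨C', c', ⟨C'', c'', ⟨hC'', hc''⟩, h1⟩, h2⟩ := h
  replace hC'' : C'' = X₁ := hC''
  replace hc'' : c'' = w := hc''
  replace h1 : IsCentroid C'' c'' X₂ w C' c' := h1
  replace h2 : IsCentroid C' c' X₃ w C c := h2
  rw [hC'', hc''] at h1
  clear hC'' hc''
  obtain ⟨hb1, hbal1, hm1⟩ := h1
  obtain ⟨hb2, hbal2, hm2⟩ := h2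
  -- C' is the midpoint of X₁ X₂
  have hde : dist X₁ C' = dist C' X₂ := by
    rw [dist_comm C' X₂]
    exact Real.sinh_injective (mul_left_cancel₀ hw.ne' hbal1)
  obtain ⟨m0, m1, m2⟩ := mid_comb h12 hb1 hde
  -- c' = 2 w cosh(dist X₁ C') > 0
  have hc' : c' = 2 * w * Real.cosh (dist X₁ C') := by
    rw [hm1, dist_comm X₂ C', ← hde]; ring
  have hc'pos : 0 < c' := by rw [hc']; positivity
  -- C' ≠ X₃
  have hC'X3 : C' ≠ X₃ := by
    intro e; exact hnc (Or.inr (Or.inr (e ▸ hb1)))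
  -- C ≠ X₃, so that sinh (dist C X₃) > 0
  have hq : 0 < dist C X₃ := by
    rcases lt_or_eq_of_le (dist_nonneg (x := C) (y := X₃)) with hq | hq
    · exact hq
    · exfalso
      have hCX3 : C = X₃ := dist_eq_zero.mp hq.symm
      have : Real.sinh (dist C' C) = 0 := by
        have : c' * Real.sinh (dist C' C) = 0 := by
          rw [hbal2, ← hCX3, dist_self, Real.sinh_zero, mul_zero]
        exact (mul_eq_zero.mp this).resolve_left hc'pos.ne'
      have : dist C' C = 0 := Real.sinh_injective (by simpa using this)
      exact hC'X3 (by rw [← hCX3]; exact dist_eq_zero.mp this)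
  have hsq : 0 < Real.sinh (dist C X₃) := Real.sinh_pos_iff.mpr hq
  -- the master combination : N * v C = k * (v X₁ + v X₂ + v X₃)
  obtain ⟨g0, g1, g2⟩ := hbtw_comb hC'X3 hb2
  set k := w * Real.sinh (dist C X₃) with hk
  have hkpos : 0 < k := by positivity
  set N := c' * Real.sinh (dist C' X₃) with hN
  have hNpos : 0 < N := by
    have : 0 < dist C' X₃ := by
      have := hb2; unfold HBtw at this
      have := dist_nonneg (x := C') (y := C); linarith
    have := Real.sinh_pos_iff.mpr this
    rw [hN]; positivity
  have hbal2' : c' * Real.sinh (dist C' C) = k := by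
    rw [hk, hbal2, dist_comm X₃ C]
  have mw0 : c' * v0 C' = w * (v0 X₁ + v0 X₂) := by rw [hc']; linear_combination w * m0
  have mw1 : c' * v1 C' = w * (v1 X₁ + v1 X₂) := by rw [hc']; linear_combination w * m1
  have mw2 : c' * v2 C' = w * (v2 X₁ + v2 X₂) := by rw [hc']; linear_combination w * m2
  have G0 : N * v0 C = k * (v0 X₁ + v0 X₂ + v0 X₃) := by
    rw [hN, hk]
    linear_combination c' * g0 + Real.sinh (dist C X₃) * mw0 + v0 X₃ * hbal2'
  have G1 : N * v1 C = k * (v1 X₁ + v1 X₂ + v1 X₃) := by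
    rw [hN, hk]
    linear_combination c' * g1 + Real.sinh (dist C X₃) * mw1 + v1 X₃ * hbal2'
  have G2 : N * v2 C = k * (v2 X₁ + v2 X₂ + v2 X₃) := by
    rw [hN, hk]
    linear_combination c' * g2 + Real.sinh (dist C X₃) * mw2 + v2 X₃ * hbal2'
  refine ⟨?_, ?_, ?_⟩
  · -- median from X₁ to M₁ (midpoint of X₂ X₃)
    obtain ⟨p0, p1, p2⟩ := mid_comb h23 h₁.1 h₁.2
    refine comb_hbtw (α := k) (β := k * (2 * Real.cosh (dist X₂ M₁))) hkpos.le
      (by positivity) hNpos ?_ ?_ ?_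
    · linear_combination G0 - k * p0
    · linear_combination G1 - k * p1
    · linear_combination G2 - k * p2
  · -- median from X₂ to M₂ (midpoint of X₁ X₃)
    obtain ⟨p0, p1, p2⟩ := mid_comb h13 h₂.1 h₂.2
    refine comb_hbtw (α := k) (β := k * (2 * Real.cosh (dist X₁ M₂))) hkpos.le
      (by positivity) hNpos ?_ ?_ ?_
    · linear_combination G0 - k * p0
    · linear_combination G1 - k * p1
    · linear_combination G2 - k * p2
  · -- median from X₃ to M₃ (midpoint of X₁ X₂)
    obtain ⟨p0, p1, p2⟩ := mid_comb h12 h₃.1 h₃.2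
    refine comb_hbtw (α := k) (β := k * (2 * Real.cosh (dist X₁ M₃))) hkpos.le
      (by positivity) hNpos ?_ ?_ ?_
    · linear_combination G0 - k * p0
    · linear_combination G1 - k * p1
    · linear_combination G2 - k * p2
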